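/- Let H be a complex Hilbert space, A : H → H a bounded self-adjoint operator, and c : H → H a bounded operator with c* = -c and c ∘ c = -I such that A ∘ c = -c ∘ A. Let l ∈ ℝ, 0 < ε < ∞, and f : (0,ε) → (0,∞) continuous with ∫₀^ε f(x) dx = +∞. If φ : (0,ε) → H is continuously differentiable, satisfies φ'(x) + A(φ(x)) = -l·f(x)·c(φ(x)) for all x ∈ (0,ε), and ∫₀^ε ‖φ(x)‖² f(x) dx < ∞, then φ(x) → 0 in H as x → 0⁺. -/

import Mathlib

open MeasureTheory Set Filter
set_option synthInstance.maxHeartbeats 1000000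
set_option maxHeartbeats 1000000

/-- Under the hypotheses of the main abstract lemma (bounded self-adjoint `A`,
skew-adjoint involution `c` anti-commuting with `A`, real `l`, `f : (0,ε) → (0,∞)`
continuous with divergent integral), any solution `φ` of `φ' + Aφ = -l f c φ` which is
square-integrable with respect to `f dx` tends to `0` in `H` as `x → 0⁺`. -/
theorem solution_tendsto_zero
    {H : Type*} [NormedAddCommGroup H] [InnerProductSpace ℂ H] [CompleteSpace H]
    (A c : H →L[ℂ] H) (hA : IsSelfAdjoint A)
    (hc_skew : ContinuousLinearMap.adjoint c = -c)
    (hc_sq : c ∘L c = -ContinuousLinearMap.id ℂ H)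
    (hAc : A ∘L c = -(c ∘L A))
    (l : ℝ) (ε : ℝ) (hε : 0 < ε)
    (f : ℝ → ℝ) (hf_cont : ContinuousOn f (Set.Ioo 0 ε))
    (hf_pos : ∀ x ∈ Set.Ioo 0 ε, 0 < f x)
    (hf_div : ∫⁻ x in Set.Ioo 0 ε, ENNReal.ofReal (f x) = ⊤)
    (φ : ℝ → H)
    (hφ_ode : ∀ x ∈ Set.Ioo 0 ε,
      HasDerivAt φ (-(A (φ x)) - ((l * f x : ℝ) : ℂ) • c (φ x)) x)
    (hφ_deriv_cont : ContinuousOn (deriv φ) (Set.Ioo 0 ε))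
    (hφ_L2 : ∫⁻ x in Set.Ioo 0 ε, ENNReal.ofReal (‖φ x‖ ^ 2 * f x) < ⊤) :
    Filter.Tendsto φ (nhdsWithin 0 (Set.Ioi 0)) (nhds 0) := by
  classical
  set K : ℝ := 2 * ‖A‖ with hKdef
  have hK0 : 0 ≤ K := by positivity
  set g : ℝ → ℝ := fun x => ‖φ x‖ ^ 2 with hgdef
  have hg0 : ∀ x, 0 ≤ g x := fun x => sq_nonneg _
  -- skew-adjointness: the real part of ⟪c v, v⟫ vanishes
  have hre_c : ∀ v : H, (inner ℂ (c v) v : ℂ).re = 0 := by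
    intro v
    have h1 : (starRingEnd ℂ) (inner ℂ (c v) v : ℂ) = -(inner ℂ (c v) v : ℂ) := by
      rw [inner_conj_symm]
      rw [← ContinuousLinearMap.adjoint_inner_left, hc_skew]
      simp [inner_neg_left]
    have h2 : (inner ℂ (c v) v : ℂ) + (starRingEnd ℂ) (inner ℂ (c v) v : ℂ) = 0 := by
      rw [h1]; ring
    have h3 := congrArg Complex.re h2
    simp only [Complex.add_re, Complex.conj_re, Complex.zero_re] at h3
    linarith [h3]
  -- derivative of g
  have hgderiv : ∀ x ∈ Set.Ioo 0 ε,
      HasDerivAt g (-2 * (inner ℂ (A (φ x)) (φ x) : ℂ).re) x := by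
    intro x hx
    set D : H := -(A (φ x)) - ((l * f x : ℝ) : ℂ) • c (φ x) with hD
    have hd := hφ_ode x hx
    have hinner : HasDerivAt (fun t => (inner ℂ (φ t) (φ t) : ℂ))
        ((inner ℂ (φ x) D : ℂ) + (inner ℂ D (φ x) : ℂ)) x := hd.inner ℂ hd
    have hre : HasDerivAt (fun t => ((inner ℂ (φ t) (φ t) : ℂ)).re)
        (((inner ℂ (φ x) D : ℂ) + (inner ℂ D (φ x) : ℂ)).re) x :=
      (Complex.reCLM.hasFDerivAt.comp_hasDerivAt x hinner)
    have heq : (fun t => ((inner ℂ (φ t) (φ t) : ℂ)).re) = g := by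
      funext t
      have := inner_self_eq_norm_sq (𝕜 := ℂ) (φ t)
      simpa using this
    have hval : ((inner ℂ (φ x) D : ℂ) + (inner ℂ D (φ x) : ℂ)).re
        = -2 * (inner ℂ (A (φ x)) (φ x) : ℂ).re := by
      have hconj : (inner ℂ (φ x) D : ℂ) = (starRingEnd ℂ) (inner ℂ D (φ x) : ℂ) :=
        (inner_conj_symm _ _).symm
      have hDval : (inner ℂ D (φ x) : ℂ)
          = -(inner ℂ (A (φ x)) (φ x) : ℂ)
            - (starRingEnd ℂ) ((l * f x : ℝ) : ℂ) * (inner ℂ (c (φ x)) (φ x) : ℂ) := by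
        rw [hD, inner_sub_left, inner_neg_left, inner_smul_left]
      have hre2 : (inner ℂ D (φ x) : ℂ).re = -(inner ℂ (A (φ x)) (φ x) : ℂ).re := by
        rw [hDval]
        simp [Complex.sub_re, Complex.neg_re, Complex.mul_re, hre_c (φ x)]
      rw [hconj, Complex.add_re, Complex.conj_re, hre2]
      ring
    rw [heq] at hre
    rwa [hval] at hre
  -- bound on the derivative of g
  have hbound : ∀ x ∈ Set.Ioo 0 ε,
      |(-2 : ℝ) * (inner ℂ (A (φ x)) (φ x) : ℂ).re| ≤ K * g x := by
    intro x hx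
    have h1 : |(inner ℂ (A (φ x)) (φ x) : ℂ).re| ≤ ‖(inner ℂ (A (φ x)) (φ x) : ℂ)‖ :=
      Complex.abs_re_le_norm _
    have h2 : ‖(inner ℂ (A (φ x)) (φ x) : ℂ)‖ ≤ ‖A (φ x)‖ * ‖φ x‖ := norm_inner_le_norm _ _
    have h3 : ‖A (φ x)‖ ≤ ‖A‖ * ‖φ x‖ := A.le_opNorm _
    have h4 : ‖A (φ x)‖ * ‖φ x‖ ≤ ‖A‖ * ‖φ x‖ * ‖φ x‖ :=
      mul_le_mul_of_nonneg_right h3 (norm_nonneg _)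
    rw [abs_mul]
    have : |(-2 : ℝ)| = 2 := by norm_num
    rw [this]
    calc 2 * |(inner ℂ (A (φ x)) (φ x) : ℂ).re| ≤ 2 * (‖A‖ * ‖φ x‖ * ‖φ x‖) := by
          nlinarith
      _ = K * g x := by rw [hKdef, hgdef]; ring
  -- continuity of g on Ioo
  have hgcont : ContinuousOn g (Set.Ioo 0 ε) := fun x hx =>
    ((hgderiv x hx).differentiableAt.continuousAt).continuousWithinAt
  -- the weighted functions
  set v : ℝ → ℝ := fun x => g x * Real.exp (K * x) with hvdef
  set u : ℝ → ℝ := fun x => g x * Real.exp (-K * x) with hudef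
  have hvderiv : ∀ x ∈ Set.Ioo 0 ε, HasDerivAt v
      ((-2 * (inner ℂ (A (φ x)) (φ x) : ℂ).re) * Real.exp (K * x)
        + g x * (Real.exp (K * x) * K)) x := by
    intro x hx
    have he : HasDerivAt (fun x => Real.exp (K * x)) (Real.exp (K * x) * K) x := by
      simpa using ((hasDerivAt_id x).const_mul K).exp
    exact (hgderiv x hx).mul he
  have huderiv : ∀ x ∈ Set.Ioo 0 ε, HasDerivAt u
      ((-2 * (inner ℂ (A (φ x)) (φ x) : ℂ).re) * Real.exp (-K * x)
        + g x * (Real.exp (-K * x) * (-K))) x := by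
    intro x hx
    have he : HasDerivAt (fun x => Real.exp (-K * x)) (Real.exp (-K * x) * (-K)) x := by
      simpa using ((hasDerivAt_id x).const_mul (-K)).exp
    exact (hgderiv x hx).mul he
  have hIoo : interior (Set.Ioo (0:ℝ) ε) = Set.Ioo 0 ε := interior_Ioo
  have hvmono : MonotoneOn v (Set.Ioo 0 ε) := by
    apply monotoneOn_of_deriv_nonneg (convex_Ioo 0 ε)
    · intro x hx
      exact ((hvderiv x hx).differentiableAt.continuousAt).continuousWithinAt
    · rw [hIoo]
      intro x hx
      exact (hvderiv x hx).differentiableAt.differentiableWithinAt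
    · rw [hIoo]
      intro x hx
      rw [(hvderiv x hx).deriv]
      have hb := hbound x hx
      have habs : -(K * g x) ≤ (-2 : ℝ) * (inner ℂ (A (φ x)) (φ x) : ℂ).re := by
        have := abs_le.1 hb
        linarith [this.1]
      have hexp : 0 < Real.exp (K * x) := Real.exp_pos _
      nlinarith [hg0 x]
  have humono : AntitoneOn u (Set.Ioo 0 ε) := by
    apply antitoneOn_of_deriv_nonpos (convex_Ioo 0 ε)
    · intro x hx
      exact ((huderiv x hx).differentiableAt.continuousAt).continuousWithinAt
    · rw [hIoo]
      intro x hx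
      exact (huderiv x hx).differentiableAt.differentiableWithinAt
    · rw [hIoo]
      intro x hx
      rw [(huderiv x hx).deriv]
      have hb := hbound x hx
      have habs : (-2 : ℝ) * (inner ℂ (A (φ x)) (φ x) : ℂ).re ≤ K * g x := by
        have := abs_le.1 hb
        linarith [this.2]
      have hexp : 0 < Real.exp (-K * x) := Real.exp_pos _
      nlinarith [hg0 x]
  -- uniform comparison
  have hcomp : ∀ x ∈ Set.Ioo 0 ε, ∀ y ∈ Set.Ioo 0 ε,
      g y * Real.exp (-(K * ε)) ≤ g x := by
    intro x hx y hy
    rcases le_total x y with hxy | hyx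
    · have h1 : u y ≤ u x := humono hx hy hxy
      have h2 : Real.exp (-(K * ε)) ≤ Real.exp (-K * y) := by
        apply Real.exp_le_exp.2
        nlinarith [hy.2.le, hK0]
      have h3 : Real.exp (-K * x) ≤ 1 := by
        apply Real.exp_le_one_iff.2
        nlinarith [hx.1.le, hK0]
      have h4 : g y * Real.exp (-(K * ε)) ≤ g y * Real.exp (-K * y) :=
        mul_le_mul_of_nonneg_left h2 (hg0 y)
      have h5 : g x * Real.exp (-K * x) ≤ g x := by
        nlinarith [hg0 x]
      calc g y * Real.exp (-(K * ε)) ≤ g y * Real.exp (-K * y) := h4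
        _ = u y := rfl
        _ ≤ u x := h1
        _ = g x * Real.exp (-K * x) := rfl
        _ ≤ g x := h5
    · have h1 : v y ≤ v x := hvmono hy hx hyx
      have h2 : (1:ℝ) ≤ Real.exp (K * y) := by
        apply Real.one_le_exp_iff.2
        nlinarith [hy.1.le, hK0]
      have h3 : Real.exp (K * x) ≤ Real.exp (K * ε) := by
        apply Real.exp_le_exp.2
        nlinarith [hx.2.le, hK0]
      have h4 : g y ≤ g x * Real.exp (K * ε) := by
        calc g y = g y * 1 := by ring
          _ ≤ g y * Real.exp (K * y) := mul_le_mul_of_nonneg_left h2 (hg0 y)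
          _ = v y := rfl
          _ ≤ v x := h1
          _ = g x * Real.exp (K * x) := rfl
          _ ≤ g x * Real.exp (K * ε) := mul_le_mul_of_nonneg_left h3 (hg0 x)
      have hEpos : 0 < Real.exp (K * ε) := Real.exp_pos _
      calc g y * Real.exp (-(K * ε)) = g y / Real.exp (K * ε) := by
            rw [Real.exp_neg]; ring
        _ ≤ g x := (div_le_iff₀ hEpos).2 (by linarith [h4])
  -- g vanishes identically
  have hzero : ∀ y ∈ Set.Ioo 0 ε, g y = 0 := by
    intro y hy
    by_contra hne
    have hgy : 0 < g y := lt_of_le_of_ne (hg0 y) (Ne.symm hne)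
    set δ : ℝ := g y * Real.exp (-(K * ε)) with hδdef
    have hδpos : 0 < δ := by positivity
    have hlow : ∀ x ∈ Set.Ioo 0 ε,
        ENNReal.ofReal δ * ENNReal.ofReal (f x) ≤ ENNReal.ofReal (‖φ x‖ ^ 2 * f x) := by
      intro x hx
      rw [← ENNReal.ofReal_mul hδpos.le]
      apply ENNReal.ofReal_le_ofReal
      have := hcomp x hx y hy
      have hfx := (hf_pos x hx).le
      have : δ ≤ g x := this
      have : δ * f x ≤ g x * f x := mul_le_mul_of_nonneg_right this hfx
      simpa [hgdef] using this
    have hmono := lintegral_mono_ae (μ := volume.restrict (Set.Ioo 0 ε))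
      ((ae_restrict_iff' measurableSet_Ioo).2 (Filter.Eventually.of_forall hlow))
    rw [lintegral_const_mul' _ _ ENNReal.ofReal_ne_top, hf_div,
      ENNReal.mul_top (by simpa [ENNReal.ofReal_eq_zero] using hδpos.not_ge)] at hmono
    exact hφ_L2.ne (top_le_iff.1 hmono)
  -- hence φ vanishes on Ioo 0 ε
  have hφzero : ∀ x ∈ Set.Ioo 0 ε, φ x = 0 := by
    intro x hx
    have h1 : ‖φ x‖ ^ 2 = 0 := by simpa [hgdef] using hzero x hx
    have h2 : ‖φ x‖ = 0 := by
      have := sq_eq_zero_iff.1 h1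
      simpa using this
    exact norm_eq_zero.1 h2
  -- conclude
  have hmem : Set.Ioo (0:ℝ) ε ∈ nhdsWithin 0 (Set.Ioi 0) :=
    Ioo_mem_nhdsGT_of_mem ⟨le_refl 0, hε⟩
  have hev : φ =ᶠ[nhdsWithin 0 (Set.Ioi 0)] fun _ => (0 : H) :=
    Filter.eventuallyEq_of_mem hmem (fun x hx => hφzero x hx)
  exact (tendsto_congr' hev).2 tendsto_const_nhds
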